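/- Let M be an n×n real matrix all of whose diagonal entries are strictly negative, let D be the diagonal matrix with the same diagonal entries as M, and for a real number t let M_t = M + (t − 1)·D. For each i ≤ n − 1, the polynomial P_i in t giving the coefficient of x^i in the characteristic polynomial of M_t has degree exactly n − i and its leading coefficient is strictly positive. -/

import Mathlib

open Matrix Polynomial Finset

/-- Bivariate total degree at most `d`. -/
def Wdeg (p : Polynomial (Polynomial ℝ)) (d : ℕ) : Prop :=
  ∀ k l, d < k + l → (p.coeff k).coeff l = 0

lemma Wdeg.mul {p q : Polynomial (Polynomial ℝ)} {d e : ℕ}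
    (hp : Wdeg p d) (hq : Wdeg q e) : Wdeg (p * q) (d + e) := by
  intro k l h
  rw [Polynomial.coeff_mul, Polynomial.finset_sum_coeff]
  refine Finset.sum_eq_zero fun x hx => ?_
  rw [Finset.HasAntidiagonal.mem_antidiagonal] at hx
  rw [Polynomial.coeff_mul]
  refine Finset.sum_eq_zero fun y hy => ?_
  rw [Finset.HasAntidiagonal.mem_antidiagonal] at hy
  rcases lt_or_ge d (x.1 + y.1) with h1 | h1
  · rw [hp _ _ h1, zero_mul]
  · rw [hq _ _ (by omega), mul_zero]

lemma Wdeg.prod {ι : Type*} (s : Finset ι) (f : ι → Polynomial (Polynomial ℝ)) (d : ι → ℕ) :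
    (∀ j ∈ s, Wdeg (f j) (d j)) → Wdeg (∏ j ∈ s, f j) (∑ j ∈ s, d j) := by
  classical
  induction s using Finset.induction with
  | empty =>
      intro _ k l hl
      simp only [Finset.sum_empty] at hl
      simp only [Finset.prod_empty, Polynomial.coeff_one]
      by_cases hk : k = 0
      · subst hk
        simp only [if_pos rfl, if_true, Polynomial.coeff_one]
        simp only [if_neg (by omega : ¬ l = 0)]
      · simp [hk]
  | @insert a s ha ih =>
      intro h
      rw [Finset.prod_insert ha, Finset.sum_insert ha]
      exact (h a (Finset.mem_insert_self a s)).mul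
        (ih fun j hj => h j (Finset.mem_insert_of_mem hj))


lemma Wdeg.mono {p : Polynomial (Polynomial ℝ)} {d e : ℕ} (hp : Wdeg p d) (hde : d ≤ e) :
    Wdeg p e := fun k l h => hp k l (lt_of_le_of_lt hde h)

lemma Wdeg.sum {ι : Type*} (s : Finset ι) (f : ι → Polynomial (Polynomial ℝ)) (d : ℕ)
    (h : ∀ j ∈ s, Wdeg (f j) d) : Wdeg (∑ j ∈ s, f j) d := by
  intro k l hl
  rw [Polynomial.finset_sum_coeff, Polynomial.finset_sum_coeff]
  exact Finset.sum_eq_zero fun j hj => h j hj k l hl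

theorem stmt_3 (n : ℕ) (M : Matrix (Fin n) (Fin n) ℝ)
    (hdiag : ∀ i, M i i < 0)
    (D : Matrix (Fin n) (Fin n) ℝ) (hD : D = Matrix.diagonal (fun i => M i i)) :
    ∀ i ≤ n - 1, ∀ P : Polynomial ℝ,
      (∀ t : ℝ, P.eval t = (M + (t - 1) • D).charpoly.coeff i) →
      P.natDegree = n - i ∧ 0 < P.leadingCoeff := by
  intro i hi P hP
  have hin : i ≤ n := by omega
  classical
  set A : Matrix (Fin n) (Fin n) (Polynomial ℝ) :=
    Matrix.of (fun j k => if j = k then Polynomial.C (M j j) * Polynomial.X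
      else Polynomial.C (M j k)) with hA
  set Q : Polynomial ℝ := A.charpoly.coeff i with hQdef
  -- P = Q
  have hmap : ∀ t : ℝ, A.map (Polynomial.evalRingHom t) = M + (t - 1) • D := by
    intro t
    ext j k
    by_cases hjk : j = k
    · subst hjk
      simp [hA, hD, Matrix.diagonal_apply_eq]
      ring
    · simp [hA, hjk, hD, Matrix.diagonal_apply_ne _ hjk]
  have hPQ : P = Q := by
    apply Polynomial.funext
    intro t
    rw [hP t, ← hmap t, Matrix.charpoly_map, hQdef]
    simp [Polynomial.coeff_map, Polynomial.coeff_map]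
  -- entries of the charmatrix
  have hWd : ∀ j : Fin n, Wdeg (charmatrix A j j) 1 := by
    intro j k l hkl
    rw [charmatrix_apply_eq, Polynomial.coeff_sub]
    have hAjj : A j j = Polynomial.C (M j j) * Polynomial.X := by simp [hA]
    rw [hAjj, Polynomial.coeff_X, Polynomial.coeff_C]
    split_ifs with h1 h2
    · omega
    · rw [sub_zero, Polynomial.coeff_one, if_neg (by omega)]
    · rw [zero_sub, Polynomial.coeff_neg, Polynomial.coeff_C_mul, Polynomial.coeff_X,
        if_neg (by omega), mul_zero, neg_zero]
    · simp
  have hWo : ∀ j k : Fin n, j ≠ k → Wdeg (charmatrix A j k) 0 := by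
    intro j k hjk a b hab
    rw [charmatrix_apply_ne _ _ _ hjk]
    have hAjk : A j k = Polynomial.C (M j k) := by simp [hA, hjk]
    rw [hAjk, Polynomial.coeff_neg, Polynomial.coeff_C]
    split_ifs with h1
    · rw [Polynomial.coeff_neg, Polynomial.coeff_C, if_neg (by omega), neg_zero]
    · rw [neg_zero, Polynomial.coeff_zero]
  have hWe : ∀ (σ : Equiv.Perm (Fin n)) (j : Fin n),
      Wdeg (charmatrix A (σ j) j) (if σ j = j then 1 else 0) := by
    intro σ j
    by_cases h : σ j = j
    · rw [if_pos h, h]; exact hWd j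
    · rw [if_neg h]; exact hWo _ _ h
  have hWsign : ∀ (σ : Equiv.Perm (Fin n)),
      Wdeg ((Equiv.Perm.sign σ : ℤ) • ∏ j, charmatrix A (σ j) j)
        (∑ j, if σ j = j then 1 else 0) := by
    intro σ k l hkl
    rw [Polynomial.coeff_smul, Polynomial.coeff_smul,
      Wdeg.prod Finset.univ _ _ (fun j _ => hWe σ j) k l hkl, smul_zero]
  -- total degree bound for the charpoly
  have hW : Wdeg A.charpoly n := by
    rw [Matrix.charpoly, Matrix.det_apply]
    apply Wdeg.sum
    intro σ _
    refine (hWsign σ).mono ?_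
    calc (∑ j, if σ j = j then 1 else 0) ≤ ∑ _j : Fin n, 1 :=
          Finset.sum_le_sum (fun j _ => by split <;> omega)
      _ = n := by simp
  have hdegQ : Q.natDegree ≤ n - i := by
    rw [Polynomial.natDegree_le_iff_coeff_eq_zero]
    intro m hm
    exact hW i m (by omega)
  -- the key coefficient
  have hkey : Q.coeff (n - i) =
      ∑ t ∈ Finset.powersetCard (n - i) Finset.univ, ∏ j ∈ t, (-(M j j)) := by
    rw [hQdef, Matrix.charpoly, Matrix.det_apply, Polynomial.finset_sum_coeff,
      Polynomial.finset_sum_coeff]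
    rw [Finset.sum_eq_single (1 : Equiv.Perm (Fin n))]
    rotate_left
    · -- non-identity permutations contribute 0
      intro σ _ hσ
      obtain ⟨j, hj⟩ : ∃ j, σ j ≠ j := by
        by_contra hc
        push_neg at hc
        exact hσ (Equiv.ext hc)
      have hsub : Finset.univ.filter (fun x => σ x = x) ⊆
          Finset.univ \ {j, σ j} := by
        intro x hx
        simp only [Finset.mem_filter, Finset.mem_univ, true_and] at hx
        simp only [Finset.mem_sdiff, Finset.mem_univ, true_and, Finset.mem_insert,
          Finset.mem_singleton]
        push_neg
        constructor
        · rintro rfl; exact hj hx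
        · rintro rfl; exact hj (σ.injective hx)
      have hpair : ({j, σ j} : Finset (Fin n)).card = 2 := by
        rw [Finset.card_insert_of_notMem (by simpa using fun h => hj h.symm),
          Finset.card_singleton]
      have h2n : 2 ≤ n := by
        have := Finset.card_le_card (Finset.subset_univ ({j, σ j} : Finset (Fin n)))
        rw [hpair, Finset.card_univ, Fintype.card_fin] at this
        exact this
      have h1 : (∑ x : Fin n, if σ x = x then 1 else 0)
          = (Finset.univ.filter (fun x => σ x = x)).card := by
        exact (Finset.card_filter _ _).symm
      have h2 := Finset.card_le_card hsub
      rw [Finset.card_sdiff_of_subset (Finset.subset_univ _), hpair, Finset.card_univ,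
        Fintype.card_fin] at h2
      exact hWsign σ i (n - i) (by omega)
    · intro h; exact absurd (Finset.mem_univ 1) h
    -- identity permutation
    simp only [Equiv.Perm.sign_one, one_smul, Equiv.Perm.one_apply]
    have hprod : ∀ j : Fin n, charmatrix A j j
        = Polynomial.X + Polynomial.C (-(Polynomial.C (M j j) * Polynomial.X)) := by
      intro j
      have hAjj : A j j = Polynomial.C (M j j) * Polynomial.X := by simp [hA]
      rw [charmatrix_apply_eq, hAjj, map_neg, ← sub_eq_add_neg]
    simp only [hprod]
    rw [Finset.prod_X_add_C_coeff Finset.univ _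
        (by simpa [Finset.card_univ] using hin),
      Polynomial.finset_sum_coeff, Finset.card_univ, Fintype.card_fin]
    apply Finset.sum_congr rfl
    intro t ht
    have htc : t.card = n - i := (Finset.mem_powersetCard.mp ht).2
    have hpt : ∏ j ∈ t, -(Polynomial.C (M j j) * Polynomial.X)
        = Polynomial.C (∏ j ∈ t, -(M j j)) * Polynomial.X ^ t.card := by
      calc ∏ j ∈ t, -(Polynomial.C (M j j) * Polynomial.X)
          = ∏ j ∈ t, (Polynomial.C (-(M j j)) * Polynomial.X) := by
            refine Finset.prod_congr rfl fun j _ => ?_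
            rw [map_neg]; ring
        _ = (∏ j ∈ t, Polynomial.C (-(M j j))) * ∏ _j ∈ t, Polynomial.X :=
            Finset.prod_mul_distrib
        _ = Polynomial.C (∏ j ∈ t, -(M j j)) * Polynomial.X ^ t.card := by
            rw [map_prod, Finset.prod_const]
    rw [hpt, htc, Polynomial.coeff_C_mul, Polynomial.coeff_X_pow, if_pos rfl, mul_one]
  have hpos : 0 < Q.coeff (n - i) := by
    rw [hkey]
    apply Finset.sum_pos
    · intro t _
      exact Finset.prod_pos fun j _ => by have := hdiag j; linarith
    · apply Finset.powersetCard_nonempty.2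
      simp [hin]
  have hQdeg : Q.natDegree = n - i :=
    le_antisymm hdegQ (Polynomial.le_natDegree_of_ne_zero (ne_of_gt hpos))
  refine ⟨by rw [hPQ, hQdeg], ?_⟩
  rw [hPQ, Polynomial.leadingCoeff, hQdeg]
  exact hpos
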